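/- Let F(Z) = Z^p + A_1 Z^{p-1} + ... + A_p be a monic polynomial over a field K of characteristic zero, with roots ξ_1, ..., ξ_p in an algebraic closure of K. For each j define the generalized discriminant D_j = Σ_{r_1 < ... < r_j} Π_{k<l, k,l ∈ {r_1,...,r_j}} (ξ_k - ξ_l)^2. Then F has exactly d distinct roots if and only if D_{d+1} = ... = D_p = 0 and D_d ≠ 0. -/

import Mathlib

open Finset

section helpers

variable {L : Type*} [Field L] {p : ℕ} (ξ : Fin p → L)

private lemma Pzero {s : Finset (Fin p)} (h : ¬ Set.InjOn ξ s) :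
    (∏ k ∈ s, ∏ l ∈ s.filter (fun l => k < l), (ξ k - ξ l) ^ 2) = 0 := by
  obtain ⟨k, hk, l, hl, hval, hne⟩ : ∃ k ∈ s, ∃ l ∈ s, ξ k = ξ l ∧ k ≠ l := by
    by_contra hc
    push_neg at hc
    exact h fun a ha b hb hab => hc a (Finset.mem_coe.1 ha) b (Finset.mem_coe.1 hb) hab
  have key : ∀ k ∈ s, ∀ l ∈ s, k < l → ξ k = ξ l →
      (∏ k ∈ s, ∏ l ∈ s.filter (fun l => k < l), (ξ k - ξ l) ^ 2) = 0 := by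
    intro k hk l hl hlt hv
    refine Finset.prod_eq_zero hk (Finset.prod_eq_zero (Finset.mem_filter.2 ⟨hl, hlt⟩) ?_)
    rw [hv, sub_self]
    simp
  rcases hne.lt_or_gt with hlt | hlt
  · exact key k hk l hl hlt hval
  · exact key l hl k hk hlt hval.symm

private lemma prod_lt_form (s : Finset (Fin p)) :
    (∏ k ∈ s, ∏ l ∈ s.filter (fun l => k < l), (ξ k - ξ l) ^ 2)
      = ∏ q ∈ s ×ˢ s, (if q.1 < q.2 then (ξ q.1 - ξ q.2) ^ 2 else 1) := by
  rw [Finset.prod_product]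
  refine Finset.prod_congr rfl fun k _ => ?_
  rw [Finset.prod_filter]

private lemma offDiag_split (s : Finset (Fin p)) (f : Fin p → Fin p → L) :
    ∏ q ∈ s.offDiag, f q.1 q.2
      = (∏ q ∈ s ×ˢ s, (if q.1 < q.2 then f q.1 q.2 else 1))
        * ∏ q ∈ s ×ˢ s, (if q.1 < q.2 then f q.2 q.1 else 1) := by
  have h1 : ∏ q ∈ s.offDiag, f q.1 q.2
      = ∏ q ∈ s ×ˢ s, (if q.1 ≠ q.2 then f q.1 q.2 else 1) := by
    rw [show s.offDiag = (s ×ˢ s).filter (fun q => q.1 ≠ q.2) by ext; simp [and_assoc],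
      Finset.prod_filter]
  have h2 : ∀ q ∈ s ×ˢ s, (if q.1 ≠ q.2 then f q.1 q.2 else 1)
      = (if q.1 < q.2 then f q.1 q.2 else 1) * (if q.2 < q.1 then f q.1 q.2 else 1) := by
    intro q _
    rcases lt_trichotomy q.1 q.2 with h | h | h
    · simp [h, h.ne, asymm h]
    · simp [h]
    · simp [h, h.ne', asymm h]
  rw [h1, Finset.prod_congr rfl h2, Finset.prod_mul_distrib]
  congr 1
  refine Finset.prod_nbij' Prod.swap Prod.swap ?_ ?_ ?_ ?_ ?_ <;>
    simp [Finset.mem_product, and_comm]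

private lemma offDiag_eq_sign_mul (s : Finset (Fin p)) :
    ∏ q ∈ s.offDiag, (ξ q.1 - ξ q.2)
      = (-1 : L) ^ (((s ×ˢ s).filter fun q => q.1 < q.2).card)
        * ∏ k ∈ s, ∏ l ∈ s.filter (fun l => k < l), (ξ k - ξ l) ^ 2 := by
  rw [prod_lt_form, offDiag_split s (fun k l => ξ k - ξ l), ← Finset.prod_mul_distrib]
  have h : ∀ q ∈ s ×ˢ s,
      (if q.1 < q.2 then (ξ q.1 - ξ q.2) else 1) * (if q.1 < q.2 then (ξ q.2 - ξ q.1) else 1)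
      = (if q.1 < q.2 then (-1 : L) else 1) * (if q.1 < q.2 then (ξ q.1 - ξ q.2) ^ 2 else 1) := by
    intro q _
    split_ifs with hq
    · ring
    · ring
  rw [Finset.prod_congr rfl h, Finset.prod_mul_distrib]
  congr 1
  rw [← Finset.prod_filter, Finset.prod_const]

private lemma two_mul_cnt (s : Finset (Fin p)) :
    2 * ((s ×ˢ s).filter fun q => q.1 < q.2).card = s.card * s.card - s.card := by
  rw [← Finset.offDiag_card]
  have hsplit : s.offDiag
      = ((s ×ˢ s).filter fun q => q.1 < q.2) ∪ ((s ×ˢ s).filter fun q => q.2 < q.1) := by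
    rw [show s.offDiag = (s ×ˢ s).filter (fun q => q.1 ≠ q.2) by ext; simp [and_assoc]]
    ext q
    simp only [Finset.mem_filter, Finset.mem_union, ne_eq]
    constructor
    · rintro ⟨hq, hne⟩
      rcases lt_or_gt_of_ne hne with h | h
      · exact Or.inl ⟨hq, h⟩
      · exact Or.inr ⟨hq, h⟩
    · rintro (⟨hq, h⟩ | ⟨hq, h⟩)
      · exact ⟨hq, h.ne⟩
      · exact ⟨hq, h.ne'⟩
  have hdisj : Disjoint ((s ×ˢ s).filter fun q => q.1 < q.2)
      ((s ×ˢ s).filter fun q => q.2 < q.1) := by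
    refine Finset.disjoint_left.2 fun q hq1 hq2 => ?_
    rw [Finset.mem_filter] at hq1 hq2
    exact absurd hq2.2 (asymm hq1.2)
  have hcard : ((s ×ˢ s).filter fun q => q.2 < q.1).card
      = ((s ×ˢ s).filter fun q => q.1 < q.2).card := by
    refine Finset.card_nbij Prod.swap ?_ ?_ ?_
    · intro q hq
      simp only [Finset.coe_filter, Finset.mem_coe, Finset.mem_filter, Finset.mem_product,
        Set.mem_setOf_eq] at hq ⊢
      exact ⟨⟨hq.1.2, hq.1.1⟩, hq.2⟩
    · intro a _ b _ hab
      exact Prod.swap_injective hab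
    · intro q hq
      simp only [Finset.coe_filter, Finset.mem_product, Set.mem_setOf_eq] at hq ⊢
      exact ⟨q.swap, ⟨⟨hq.1.2, hq.1.1⟩, hq.2⟩, Prod.swap_swap q⟩
  rw [hsplit, Finset.card_union_of_disjoint hdisj, hcard]
  ring

private lemma offDiag_reindex [DecidableEq L] (s : Finset (Fin p)) (hinj : Set.InjOn ξ s) :
    ∏ q ∈ s.offDiag, (ξ q.1 - ξ q.2) = ∏ q ∈ (s.image ξ).offDiag, (q.1 - q.2) := by
  refine Finset.prod_nbij (fun q => (ξ q.1, ξ q.2)) ?_ ?_ ?_ fun a _ => rfl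
  · intro q hq
    rw [Finset.mem_offDiag] at hq ⊢
    exact ⟨Finset.mem_image_of_mem ξ hq.1, Finset.mem_image_of_mem ξ hq.2.1,
      fun h => hq.2.2 (hinj (Finset.mem_coe.2 hq.1) (Finset.mem_coe.2 hq.2.1) h)⟩
  · intro a ha b hb hab
    rw [Finset.coe_offDiag, Set.mem_offDiag] at ha hb
    simp only [Prod.mk.injEq] at hab
    exact Prod.ext (hinj ha.1 hb.1 hab.1) (hinj ha.2.1 hb.2.1 hab.2)
  · rintro ⟨a, b⟩ hab
    rw [Finset.coe_offDiag, Set.mem_offDiag] at hab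
    obtain ⟨k, hk, rfl⟩ := Finset.mem_image.1 (Finset.mem_coe.1 hab.1)
    obtain ⟨l, hl, rfl⟩ := Finset.mem_image.1 (Finset.mem_coe.1 hab.2.1)
    refine ⟨(k, l), ?_, rfl⟩
    rw [Finset.mem_coe, Finset.mem_offDiag]
    exact ⟨hk, hl, fun h => hab.2.2 (congrArg ξ h)⟩

private lemma Pnonzero {s : Finset (Fin p)} (hinj : Set.InjOn ξ s) :
    (∏ k ∈ s, ∏ l ∈ s.filter (fun l => k < l), (ξ k - ξ l) ^ 2) ≠ 0 := by
  refine Finset.prod_ne_zero_iff.2 fun k hk => Finset.prod_ne_zero_iff.2 fun l hl => ?_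
  obtain ⟨hls, hkl⟩ := Finset.mem_filter.1 hl
  exact pow_ne_zero _ (sub_ne_zero.2 fun h =>
    hkl.ne (hinj (Finset.mem_coe.2 hk) (Finset.mem_coe.2 hls) h))

private lemma sum_ne_zero' [DecidableEq L] [CharZero L] (hp : 0 < p) :
    (∑ s ∈ Finset.powersetCard ((Finset.univ.image ξ).card) (Finset.univ : Finset (Fin p)),
      ∏ k ∈ s, ∏ l ∈ s.filter (fun l => k < l), (ξ k - ξ l) ^ 2) ≠ 0 := by
  classical
  have : Nonempty (Fin p) := ⟨⟨0, hp⟩⟩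
  set T := (Finset.univ.image ξ) with hT
  set e := T.card with he
  have hsec : ∀ a ∈ T, ξ (Function.invFun ξ a) = a := by
    intro a ha
    obtain ⟨k, _, hk⟩ := Finset.mem_image.1 ha
    exact Function.invFun_eq ⟨k, hk⟩
  set s₀ := T.image (Function.invFun ξ) with hs₀
  have hfix : ∀ k ∈ s₀, Function.invFun ξ (ξ k) = k := by
    intro k hk
    obtain ⟨a, haT, rfl⟩ := Finset.mem_image.1 hk
    rw [hsec a haT]
  have hinj₀ : Set.InjOn ξ s₀ := fun a ha b hb h => by
    rw [← hfix a (Finset.mem_coe.1 ha), ← hfix b (Finset.mem_coe.1 hb), h]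
  have himg : s₀.image ξ = T := by
    rw [hs₀, Finset.image_image]
    refine Finset.ext fun a => ?_
    simp only [Finset.mem_image, Function.comp]
    constructor
    · rintro ⟨b, hb, rfl⟩
      rw [hsec b hb]; exact hb
    · intro ha
      exact ⟨a, ha, hsec a ha⟩
  have hcard₀ : s₀.card = e := by
    have h1 : s₀.card ≤ T.card := Finset.card_image_le
    have h2 : T.card ≤ s₀.card := by
      conv_lhs => rw [← himg]
      exact Finset.card_image_le
    omega
  have hmem₀ : s₀ ∈ Finset.powersetCard e (Finset.univ : Finset (Fin p)) :=
    Finset.mem_powersetCard_univ.2 hcard₀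
  -- all injective subsets of size e give the same product
  have hval : ∀ s ∈ Finset.powersetCard e (Finset.univ : Finset (Fin p)), Set.InjOn ξ s →
      (∏ k ∈ s, ∏ l ∈ s.filter (fun l => k < l), (ξ k - ξ l) ^ 2)
        = ∏ k ∈ s₀, ∏ l ∈ s₀.filter (fun l => k < l), (ξ k - ξ l) ^ 2 := by
    intro s hs hinj
    have hcard : s.card = e := Finset.mem_powersetCard_univ.1 hs
    have hims : s.image ξ = T := by
      refine Finset.eq_of_subset_of_card_le (Finset.image_subset_image (Finset.subset_univ s)) ?_
      rw [Finset.card_image_of_injOn hinj, hcard]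
    have hcnt : ((s ×ˢ s).filter fun q => q.1 < q.2).card
        = ((s₀ ×ˢ s₀).filter fun q => q.1 < q.2).card := by
      have h1 := two_mul_cnt s
      have h2 := two_mul_cnt s₀
      rw [hcard] at h1
      rw [hcard₀] at h2
      omega
    have key : (-1 : L) ^ (((s₀ ×ˢ s₀).filter fun q => q.1 < q.2).card)
          * (∏ k ∈ s, ∏ l ∈ s.filter (fun l => k < l), (ξ k - ξ l) ^ 2)
        = (-1 : L) ^ (((s₀ ×ˢ s₀).filter fun q => q.1 < q.2).card)
          * ∏ k ∈ s₀, ∏ l ∈ s₀.filter (fun l => k < l), (ξ k - ξ l) ^ 2 := by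
      rw [← hcnt, ← offDiag_eq_sign_mul, hcnt, ← offDiag_eq_sign_mul,
        offDiag_reindex ξ s hinj, offDiag_reindex ξ s₀ hinj₀, hims, himg]
    exact mul_left_cancel₀ (pow_ne_zero _ (neg_ne_zero.2 one_ne_zero)) key
  rw [← Finset.sum_filter_add_sum_filter_not
    (Finset.powersetCard e (Finset.univ : Finset (Fin p))) (fun s : Finset (Fin p) => Set.InjOn ξ (s : Set (Fin p)))]
  have hz : (∑ s ∈ (Finset.powersetCard e (Finset.univ : Finset (Fin p))).filter
      (fun s : Finset (Fin p) => ¬ Set.InjOn ξ (s : Set (Fin p))),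
      ∏ k ∈ s, ∏ l ∈ s.filter (fun l => k < l), (ξ k - ξ l) ^ 2) = 0 :=
    Finset.sum_eq_zero fun s hs => Pzero ξ (Finset.mem_filter.1 hs).2
  rw [hz, add_zero]
  have hconst : (∑ s ∈ (Finset.powersetCard e (Finset.univ : Finset (Fin p))).filter
      (fun s : Finset (Fin p) => Set.InjOn ξ (s : Set (Fin p))),
      ∏ k ∈ s, ∏ l ∈ s.filter (fun l => k < l), (ξ k - ξ l) ^ 2)
      = ((Finset.powersetCard e (Finset.univ : Finset (Fin p))).filter
        (fun s : Finset (Fin p) => Set.InjOn ξ (s : Set (Fin p)))).card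
        • ∏ k ∈ s₀, ∏ l ∈ s₀.filter (fun l => k < l), (ξ k - ξ l) ^ 2 := by
    rw [← Finset.sum_const]
    refine Finset.sum_congr rfl fun s hs => ?_
    obtain ⟨hs1, hs2⟩ := Finset.mem_filter.1 hs
    exact hval s hs1 hs2
  rw [hconst, nsmul_eq_mul]
  refine mul_ne_zero ?_ (Pnonzero ξ hinj₀)
  rw [Nat.cast_ne_zero, ← Nat.pos_iff_ne_zero, Finset.card_pos]
  exact ⟨s₀, Finset.mem_filter.2 ⟨hmem₀, hinj₀⟩⟩

end helpers

/-- Generalized discriminants detect the number of distinct roots: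
`F = ∏ (Z - ξ i)` is monic of degree `p` over a field of characteristic zero,
`D j = Σ_{r₁<...<r_j} ∏_{k<l ∈ {r₁,...,r_j}} (ξ_k - ξ_l)²`.
Then `F` has exactly `d` distinct roots iff `D_{d+1} = ... = D_p = 0` and `D_d ≠ 0`. -/
theorem stmt0 {L : Type*} [Field L] [CharZero L] (p d : ℕ) (hd : 1 ≤ d) (hdp : d ≤ p)
    (ξ : Fin p → L) (F : Polynomial L)
    (hF : F = ∏ k : Fin p, (Polynomial.X - Polynomial.C (ξ k)))
    (D : ℕ → L)
    (hD : ∀ j, D j = ∑ s ∈ Finset.powersetCard j (Finset.univ : Finset (Fin p)),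
      ∏ k ∈ s, ∏ l ∈ s.filter (fun l => k < l), (ξ k - ξ l) ^ 2) :
    Set.ncard (Set.range ξ) = d ↔
      ((∀ j, d < j → j ≤ p → D j = 0) ∧ D d ≠ 0) := by
  classical
  set T := (Finset.univ.image ξ) with hT
  set e := T.card with he
  have hrange : Set.range ξ = ↑T := by
    rw [hT, Finset.coe_image, Finset.coe_univ, Set.image_univ]
  have hncard : Set.ncard (Set.range ξ) = e := by
    rw [hrange, Set.ncard_coe_finset]
  have hep : e ≤ p := by
    calc e ≤ (Finset.univ : Finset (Fin p)).card := Finset.card_image_le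
    _ = p := by simp
  have hA : ∀ j, e < j → D j = 0 := by
    intro j hj
    rw [hD]
    refine Finset.sum_eq_zero fun s hs => Pzero ξ fun hinj => ?_
    have hcard : s.card = j := Finset.mem_powersetCard_univ.1 hs
    have h1 : (s.image ξ).card ≤ e :=
      Finset.card_le_card (Finset.image_subset_image (Finset.subset_univ s))
    rw [Finset.card_image_of_injOn hinj, hcard] at h1
    omega
  have hB : D e ≠ 0 := by
    rw [hD]
    exact sum_ne_zero' ξ (lt_of_lt_of_le hd hdp)
  rw [hncard]
  constructor
  · intro h
    exact ⟨fun j hj _ => hA j (h ▸ hj), h ▸ hB⟩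
  · rintro ⟨hz, hnz⟩
    by_contra hne
    rcases lt_or_gt_of_ne hne with hlt | hgt
    · exact hnz (hA d hlt)
    · exact hB (hz e hgt hep)
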